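/- Let $(\alpha,\beta)$ be a Bailey pair relative to $a$ and let $k \ge 1$ be an integer. Define $\alpha_L^{(k)} = a^{kL}q^{kL^2}\alpha_L$ and $\beta_L^{(k)} = \sum_{L \ge r_1 \ge \cdots \ge r_k \ge 0} \frac{a^{r_1+\cdots+r_k} q^{r_1^2+\cdots+r_k^2}}{(q)_{L-r_1}(q)_{r_1-r_2}\cdots(q)_{r_{k-1}-r_k}} \beta_{r_k}$. Then $(\alpha^{(k)},\beta^{(k)})$ is a Bailey pair relative to $a$. -/

import Mathlib

open Finset

/-- The $q$-Pochhammer symbol $(x;q)_n$. -/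
noncomputable def qp (q x : ℂ) (n : ℕ) : ℂ := ∏ k ∈ Finset.range n, (1 - x * q ^ k)

lemma qp_zero (q x : ℂ) : qp q x 0 = 1 := by simp [qp]

lemma qp_succ (q x : ℂ) (n : ℕ) : qp q x (n+1) = qp q x n * (1 - x * q ^ n) := by
  simp [qp, Finset.prod_range_succ]

lemma qp_add (q x : ℂ) (m n : ℕ) : qp q x (m + n) = qp q x m * qp q (x * q ^ m) n := by
  rw [qp, qp, qp, Finset.prod_range_add]
  congr 1
  apply Finset.prod_congr rfl
  intro k _
  rw [pow_add]
  ring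

lemma qp_one_eq_zero (q : ℂ) (n : ℕ) (hn : 1 ≤ n) : qp q 1 n = 0 := by
  apply Finset.prod_eq_zero (Finset.mem_range.2 (by omega : (0:ℕ) < n))
  simp

/-- Gaussian binomial as a complex number. -/
noncomputable def qb (q : ℂ) (n j : ℕ) : ℂ :=
  if j ≤ n then qp q q n / (qp q q j * qp q q (n - j)) else 0

section
variable (q : ℂ) (hq : ∀ n, qp q q n ≠ 0)
include hq

lemma factor_ne_zero (n : ℕ) : (1 : ℂ) - q * q ^ n ≠ 0 := by
  have := hq (n+1)
  rw [qp_succ] at this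
  exact (mul_ne_zero_iff.mp this).2

lemma qb_zero (n : ℕ) : qb q n 0 = 1 := by
  simp [qb, qp_zero, div_self (hq n)]

lemma qb_self (n : ℕ) : qb q n n = 1 := by
  simp [qb, qp_zero, div_self (hq n)]

lemma qb_pascal (m t : ℕ) :
    qb q (m+1) (t+1) = qb q m (t+1) + q ^ (m - t) * qb q m t := by
  by_cases ht : t ≤ m
  · by_cases ht2 : t + 1 ≤ m
    · obtain ⟨d, hd⟩ : ∃ d, m = t + 1 + d := ⟨m - (t+1), by omega⟩
      subst hd
      rw [qb, qb, qb, if_pos (by omega), if_pos (by omega), if_pos (by omega)]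
      have h1 : t + 1 + d + 1 - (t + 1) = d + 1 := by omega
      have h2 : t + 1 + d - (t + 1) = d := by omega
      have h3 : t + 1 + d - t = d + 1 := by omega
      rw [h1, h2, h3]
      rw [show t+1+d+1 = (t+1+d)+1 from rfl, qp_succ, qp_succ q q d, qp_succ q q t]
      have h4 := hq (t+1+d); have h5 := hq d; have h7 := hq t
      have h8 := factor_ne_zero q hq d
      have h9 := factor_ne_zero q hq t
      have h10 := factor_ne_zero q hq (t+1+d)
      field_simp
      ring
    · have : t = m := by omega
      subst this
      rw [qb_self q hq, qb_self q hq, qb]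
      rw [if_neg (by omega)]
      simp
  · rw [qb, qb, qb, if_neg (by omega), if_neg (by omega), if_neg (by omega)]
    simp
end

lemma qb_eq_zero (q : ℂ) {n j : ℕ} (h : n < j) : qb q n j = 0 := by
  rw [qb, if_neg (by omega)]

section
variable (q : ℂ) (hq : ∀ n, qp q q n ≠ 0)
include hq

lemma cauchy (m : ℕ) (x : ℂ) :
    qp q x m = ∑ t ∈ range (m+1), qb q m t * (-1)^t * q^(Nat.choose t 2) * x^t := by
  induction m generalizing x with
  | zero => simp [qp_zero, qb_zero q hq]
  | succ m IH =>
    rw [qp_succ, IH x, mul_one_sub, Finset.sum_mul]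
    rw [Finset.sum_range_succ' (fun t => qb q (m+1) t * (-1)^t * q^(Nat.choose t 2) * x^t) (m+1)]
    have hzero : qb q m (m+1) * (-1)^(m+1) * q^(Nat.choose (m+1) 2) * x^(m+1) = 0 := by
      rw [qb_eq_zero q (by omega)]; ring
    have hext : (∑ t ∈ range (m+1), qb q m t * (-1)^t * q^(Nat.choose t 2) * x^t)
        = (∑ t ∈ range (m+1), qb q m (t+1) * (-1)^(t+1) * q^(Nat.choose (t+1) 2) * x^(t+1))
          + qb q m 0 * (-1)^0 * q^(Nat.choose 0 2) * x^0 := by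
      rw [Finset.sum_range_succ
        (fun t => qb q m (t+1) * (-1)^(t+1) * q^(Nat.choose (t+1) 2) * x^(t+1)) m, hzero, add_zero]
      exact Finset.sum_range_succ' _ m
    rw [hext]
    have hc0 : qb q m 0 * (-1:ℂ)^0 * q^(Nat.choose 0 2) * x^0
        = qb q (m+1) 0 * (-1:ℂ)^0 * q^(Nat.choose 0 2) * x^0 := by
      rw [qb_zero q hq, qb_zero q hq]
    rw [hc0, add_sub_right_comm, ← Finset.sum_sub_distrib]
    congr 1
    apply Finset.sum_congr rfl
    intro t ht
    rw [Finset.mem_range] at ht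
    have htm : t ≤ m := by omega
    have hc : Nat.choose (t+1) 2 = Nat.choose t 2 + t := by
      rw [Nat.choose_succ_succ t 1, Nat.choose_one_right, Nat.add_comm]
    have he : q^(m-t) * q^(Nat.choose (t+1) 2) = q^m * q^(Nat.choose t 2) := by
      rw [← pow_add, ← pow_add, hc]
      congr 1
      omega
    rw [qb_pascal q hq m t]
    linear_combination ((-1:ℂ)^t * x^t * x * qb q m t) * he
end

lemma two_choose_two (s : ℕ) : 2 * Nat.choose s 2 = s * (s - 1) := by
  rw [Nat.choose_two_right]
  exact Nat.mul_div_cancel' (Nat.even_mul_pred_self s).two_dvd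

lemma exp_identity (j d : ℕ) :
    j^2 + Nat.choose d 2 + (j+1)*d = Nat.choose j 2 + Nat.choose (j+d+1) 2 := by
  have key : 2*j^2 + d*(d-1) + 2*((j+1)*d) = j*(j-1) + (j+d+1)*(j+d) := by
    cases j with
    | zero =>
      cases d with
      | zero => rfl
      | succ e => simp [Nat.succ_sub_one]; ring
    | succ w =>
      cases d with
      | zero => simp [Nat.succ_sub_one]; ring
      | succ e => simp [Nat.succ_sub_one]; ring
  have a1 := two_choose_two d
  have a2 := two_choose_two j
  have a3 : 2 * Nat.choose (j+d+1) 2 = (j+d+1)*(j+d) := by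
    rw [two_choose_two]; simp
  apply Nat.eq_of_mul_eq_mul_left (show 0 < 2 by norm_num)
  calc 2 * (j^2 + Nat.choose d 2 + (j+1)*d)
      = 2*j^2 + 2*Nat.choose d 2 + 2*((j+1)*d) := by ring
    _ = 2*j^2 + d*(d-1) + 2*((j+1)*d) := by rw [a1]
    _ = j*(j-1) + (j+d+1)*(j+d) := key
    _ = 2*Nat.choose j 2 + 2*Nat.choose (j+d+1) 2 := by rw [a2, a3]
    _ = 2 * (Nat.choose j 2 + Nat.choose (j+d+1) 2) := by ring

section
variable (q : ℂ) (hq : ∀ n, qp q q n ≠ 0)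
include hq

lemma qb_mul (n j d : ℕ) (h : j + d ≤ n) :
    qb q n j * qb q (n - j) d = qb q n (j + d) * qb q (j + d) j := by
  obtain ⟨v, hv⟩ : ∃ v, n = j + d + v := ⟨n - (j+d), by omega⟩
  subst hv
  rw [qb, qb, qb, qb, if_pos (by omega), if_pos (by omega), if_pos (by omega),
    if_pos (by omega)]
  have e1 : j + d + v - j = d + v := by omega
  have e2 : d + v - d = v := by omega
  have e3 : j + d + v - (j + d) = v := by omega
  have e4 : j + d - j = d := by omega
  rw [e1, e2, e3, e4]
  have h1 := hq (j+d+v); have h2 := hq j; have h3 := hq (d+v); have h4 := hq d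
  have h5 := hq v; have h6 := hq (j+d)
  field_simp
end

section
variable (q : ℂ) (hq : ∀ n, qp q q n ≠ 0)
include hq

lemma Skey (n : ℕ) (b : ℂ) :
    ∑ j ∈ range (n+1), qb q n j * b^j * q^(j^2) * qp q (b*q^(j+1)) (n-j) = 1 := by
  have step1 : ∀ j ∈ range (n+1),
      qb q n j * b^j * q^(j^2) * qp q (b*q^(j+1)) (n-j)
      = ∑ N ∈ Finset.Ico j (n+1), qb q n j * b^j * q^(j^2) *
          (qb q (n-j) (N-j) * (-1)^(N-j) * q^(Nat.choose (N-j) 2) * (b*q^(j+1))^(N-j)) := by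
    intro j hj
    rw [Finset.mem_range] at hj
    rw [cauchy q hq (n-j) (b*q^(j+1)), Finset.mul_sum]
    rw [Finset.sum_Ico_eq_sum_range]
    have hnj : n + 1 - j = (n - j) + 1 := by omega
    rw [hnj]
    apply Finset.sum_congr rfl
    intro t _
    simp [Nat.add_sub_cancel_left]
  rw [Finset.sum_congr rfl step1]
  rw [Finset.range_eq_Ico, Finset.sum_Ico_Ico_comm]
  have step2 : ∀ N ∈ Finset.Ico 0 (n+1),
      (∑ j ∈ Finset.Ico 0 (N+1), qb q n j * b^j * q^(j^2) *
          (qb q (n-j) (N-j) * (-1)^(N-j) * q^(Nat.choose (N-j) 2) * (b*q^(j+1))^(N-j)))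
      = qb q n N * (-1)^N * q^(Nat.choose (N+1) 2) * b^N * qp q 1 N := by
    intro N hN
    rw [Finset.mem_Ico] at hN
    rw [cauchy q hq N 1, Finset.mul_sum, ← Finset.range_eq_Ico]
    apply Finset.sum_congr rfl
    intro j hj
    rw [Finset.mem_range] at hj
    obtain ⟨d, rfl⟩ : ∃ d, N = j + d := ⟨N - j, by omega⟩
    have hdn : j + d ≤ n := by omega
    simp only [Nat.add_sub_cancel_left]
    have hQB := qb_mul q hq n j d hdn
    have hqE : q^(j^2) * q^(Nat.choose d 2) * q^((j+1)*d)
        = q^(Nat.choose j 2) * q^(Nat.choose (j+d+1) 2) := by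
      rw [← pow_add, ← pow_add, ← pow_add, exp_identity]
    have combined : (qb q n j * qb q (n-j) d) * (q^(j^2) * q^(Nat.choose d 2) * q^((j+1)*d))
        = (qb q n (j+d) * qb q (j+d) j) * (q^(Nat.choose j 2) * q^(Nat.choose (j+d+1) 2)) := by
      rw [hQB, hqE]
    have hs : (-1:ℂ)^(j+d) * (-1:ℂ)^j = (-1:ℂ)^d := by
      rw [← pow_add, show j+d+j = 2*j+d by omega, pow_add, pow_mul]
      norm_num
    rw [mul_pow b (q^(j+1)) d, ← pow_mul q (j+1) d]
    linear_combination ((-1:ℂ)^d * b^j * b^d) * combined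
      - (qb q n (j+d) * qb q (j+d) j * q^(Nat.choose j 2) * q^(Nat.choose (j+d+1) 2)
          * b^j * b^d) * hs
  rw [Finset.sum_congr rfl step2, ← Finset.range_eq_Ico]
  rw [Finset.sum_eq_single 0]
  · norm_num [qb_zero q hq, qp_zero]
  · intro N _ hN0
    rw [qp_one_eq_zero q N (by omega), mul_zero]
  · intro h
    exact absurd (Finset.mem_range.2 (by omega)) h

lemma KI (b : ℂ) (hbq : ∀ m, qp q (b*q) m ≠ 0) (n : ℕ) :
    ∑ j ∈ range (n+1), b^j * q^(j^2) / (qp q q j * qp q q (n-j) * qp q (b*q) j)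
      = 1 / (qp q q n * qp q (b*q) n) := by
  rw [eq_div_iff (mul_ne_zero (hq n) (hbq n)), Finset.sum_mul]
  rw [← Skey q hq n b]
  apply Finset.sum_congr rfl
  intro j hj
  rw [Finset.mem_range] at hj
  have hjn : j ≤ n := by omega
  have hQn : qp q (b*q) n = qp q (b*q) j * qp q (b*q^(j+1)) (n-j) := by
    have := qp_add q (b*q) j (n-j)
    rw [show j + (n-j) = n by omega] at this
    rw [this]
    congr 2
    rw [pow_succ]
    ring
  have hqb : qb q n j = qp q q n / (qp q q j * qp q q (n-j)) := by
    rw [qb, if_pos hjn]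
  rw [hQn, hqb]
  have h1 := hq j; have h2 := hq (n-j); have h3 := hbq j; have h4 := hq n
  field_simp
end

lemma bailey_step (q a : ℂ) (hq : ∀ n, qp q q n ≠ 0) (haq : ∀ n, qp q (a*q) n ≠ 0)
    (x y : ℕ → ℂ)
    (h : ∀ L, y L = ∑ i ∈ range (L+1), x i / (qp q q (L-i) * qp q (a*q) (L+i))) (L : ℕ) :
    ∑ r ∈ range (L+1), a^r * q^(r^2) / qp q q (L-r) * y r
      = ∑ i ∈ range (L+1), (a^i * q^(i^2) * x i) / (qp q q (L-i) * qp q (a*q) (L+i)) := by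
  have h1 : ∀ r ∈ range (L+1), a^r * q^(r^2) / qp q q (L-r) * y r
      = ∑ i ∈ range (r+1), a^r * q^(r^2) / qp q q (L-r)
          * (x i / (qp q q (r-i) * qp q (a*q) (r+i))) := by
    intro r _
    rw [h r, Finset.mul_sum]
  rw [Finset.sum_congr rfl h1]
  simp only [Finset.range_eq_Ico]
  rw [← Finset.sum_Ico_Ico_comm]
  apply Finset.sum_congr rfl
  intro i hi
  rw [Finset.mem_Ico] at hi
  have hiL : i ≤ L := by omega
  have hbq : ∀ m, qp q ((a*q^(2*i))*q) m ≠ 0 := by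
    intro m
    have h2 := haq (2*i+m)
    rw [qp_add, show (a*q)*q^(2*i) = (a*q^(2*i))*q by ring] at h2
    exact (mul_ne_zero_iff.mp h2).2
  simp only [Finset.sum_Ico_eq_sum_range]
  rw [show L+1-i = (L-i)+1 by omega]
  have hterm : ∀ j ∈ range ((L-i)+1),
      a^(i+j) * q^((i+j)^2) / qp q q (L-(i+j))
          * (x i / (qp q q ((i+j)-i) * qp q (a*q) ((i+j)+i)))
      = (x i * (a^i * q^(i^2) / qp q (a*q) (2*i)))
          * ((a*q^(2*i))^j * q^(j^2)
              / (qp q q j * qp q q ((L-i)-j) * qp q ((a*q^(2*i))*q) j)) := by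
    intro j hj
    have e1 : (i+j)-i = j := by omega
    have e2 : (i+j)+i = 2*i+j := by omega
    have e3 : L-(i+j) = (L-i)-j := by omega
    rw [e1, e2, e3]
    have hsplit : qp q (a*q) (2*i+j) = qp q (a*q) (2*i) * qp q ((a*q^(2*i))*q) j := by
      rw [qp_add]
      congr 2
      ring
    have hb : (a*q^(2*i))^j = a^j * q^(2*i*j) := by rw [mul_pow, ← pow_mul]
    have ha : a^(i+j) = a^i * a^j := pow_add a i j
    have hq2 : q^((i+j)^2) = q^(i^2) * q^(2*i*j) * q^(j^2) := by
      rw [← pow_add, ← pow_add]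
      congr 1
      ring
    rw [hsplit, hb, ha, hq2]
    have n1 := hq j; have n2 := hq ((L-i)-j); have n3 := hbq j
    have n4 : qp q (a*q) (2*i) ≠ 0 := haq (2*i)
    field_simp
  rw [Finset.sum_congr rfl hterm, ← Finset.mul_sum]
  rw [KI q hq (a*q^(2*i)) hbq (L-i)]
  have hQLi : qp q (a*q) (L+i) = qp q (a*q) (2*i) * qp q ((a*q^(2*i))*q) (L-i) := by
    have h3 := qp_add q (a*q) (2*i) (L-i)
    rw [show 2*i + (L-i) = L+i by omega] at h3
    rw [h3]
    congr 2
    ring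
  rw [hQLi]
  have n1 := hq (L-i); have n2 := hbq (L-i); have n3 : qp q (a*q) (2*i) ≠ 0 := haq (2*i)
  field_simp

noncomputable def BB (q a : ℂ) (β : ℕ → ℂ) : ℕ → ℕ → ℂ
  | 0 => β
  | (k+1) => fun L => ∑ r ∈ range (L+1), a^r * q^(r^2) / qp q q (L-r) * BB q a β k r

lemma BB_bp (q a : ℂ) (hq : ∀ n, qp q q n ≠ 0) (haq : ∀ n, qp q (a*q) n ≠ 0)
    (α β : ℕ → ℂ)
    (hBP : ∀ L, β L = ∑ i ∈ range (L+1), α i / (qp q q (L-i) * qp q (a*q) (L+i))) :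
    ∀ k L, BB q a β k L = ∑ i ∈ range (L+1),
      (a^(k*i) * q^(k*i^2) * α i) / (qp q q (L-i) * qp q (a*q) (L+i)) := by
  intro k
  induction k with
  | zero =>
    intro L
    simpa [BB] using hBP L
  | succ k IH =>
    intro L
    have step := bailey_step q a hq haq (fun i => a^(k*i) * q^(k*i^2) * α i)
      (BB q a β k) IH L
    show (∑ r ∈ range (L+1), a^r * q^(r^2) / qp q q (L-r) * BB q a β k r) = _
    rw [step]
    apply Finset.sum_congr rfl
    intro i _
    congr 1
    rw [show (k+1)*i = i + k*i by ring, show (k+1)*i^2 = i^2 + k*i^2 by ring,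
      pow_add, pow_add]
    ring

noncomputable def G (q a : ℂ) (β : ℕ → ℂ) (k L : ℕ) (f : ℕ → ℕ) : ℂ :=
  if ∀ i < k - 1, f (i + 1) ≤ f i then
    a ^ (∑ i ∈ Finset.range k, f i) * q ^ (∑ i ∈ Finset.range k, (f i) ^ 2) /
      (qp q q (L - f 0) * ∏ i ∈ Finset.range (k - 1), qp q q (f i - f (i + 1))) *
      β (f (k - 1))
  else 0

noncomputable def FS (q a : ℂ) (β : ℕ → ℂ) (k L : ℕ) : ℂ :=
  ∑ r : Fin k → Fin (L + 1),
    G q a β k L (fun i => if h : i < k then (r ⟨i, h⟩ : ℕ) else 0)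

lemma G_cons (q a : ℂ) (β : ℕ → ℂ) (k : ℕ) (hk : 1 ≤ k) (L m : ℕ) (f g : ℕ → ℕ)
    (hf0 : f 0 = m) (hfs : ∀ i, f (i+1) = g i) :
    G q a β (k+1) L f
      = if g 0 ≤ m then a^m * q^(m^2) / qp q q (L-m) * G q a β k m g else 0 := by
  obtain ⟨k', rfl⟩ : ∃ k', k = k'+1 := ⟨k-1, by omega⟩
  rw [G, G]
  have hcond : (∀ i < k'+1+1-1, f (i+1) ≤ f i)
      ↔ (g 0 ≤ m ∧ ∀ i < k'+1-1, g (i+1) ≤ g i) := by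
    simp only [Nat.add_sub_cancel]
    constructor
    · intro hC
      constructor
      · have h0 := hC 0 (by omega)
        rwa [hfs 0, hf0] at h0
      · intro i hi
        have h1 := hC (i+1) (by omega)
        rwa [hfs (i+1), hfs i] at h1
    · rintro ⟨h1, h2⟩ i hi
      cases i with
      | zero => rw [hfs 0, hf0]; exact h1
      | succ j => rw [hfs (j+1), hfs j]; exact h2 j (by omega)
  simp only [hcond]
  by_cases h1 : g 0 ≤ m
  · by_cases h2 : ∀ i < k'+1-1, g (i+1) ≤ g i
    · rw [if_pos ⟨h1, h2⟩, if_pos h1, if_pos h2]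
      have hsum : ∑ i ∈ range (k'+1+1), f i = (∑ i ∈ range (k'+1), g i) + m := by
        rw [Finset.sum_range_succ' f (k'+1), hf0]
        congr 1
        exact Finset.sum_congr rfl fun i _ => hfs i
      have hsq : ∑ i ∈ range (k'+1+1), (f i)^2
          = (∑ i ∈ range (k'+1), (g i)^2) + m^2 := by
        rw [Finset.sum_range_succ' (fun i => (f i)^2) (k'+1), hf0]
        congr 1
        exact Finset.sum_congr rfl fun i _ => by rw [hfs i]
      have hprod : ∏ i ∈ range (k'+1+1-1), qp q q (f i - f (i+1))
          = (∏ i ∈ range (k'+1-1), qp q q (g i - g (i+1))) * qp q q (m - g 0) := by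
        simp only [Nat.add_sub_cancel]
        rw [Finset.prod_range_succ' (fun i => qp q q (f i - f (i+1))) k', hf0, hfs 0]
        congr 1
        exact Finset.prod_congr rfl fun i _ => by rw [hfs (i+1), hfs i]
      have hβ : f (k'+1+1-1) = g (k'+1-1) := by
        simp only [Nat.add_sub_cancel]
        exact hfs k'
      rw [hsum, hsq, hprod, hβ, hf0, pow_add, pow_add]
      ring
    · rw [if_neg (by tauto), if_pos h1, if_neg h2]
      ring
  · rw [if_neg (by tauto), if_neg h1]

lemma FS_one (q a : ℂ) (β : ℕ → ℂ) (L : ℕ) :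
    FS q a β 1 L = ∑ m ∈ range (L+1), a^m * q^(m^2) / qp q q (L-m) * β m := by
  rw [FS]
  rw [← Equiv.sum_comp (Equiv.funUnique (Fin 1) (Fin (L+1))).symm
    (fun r => G q a β 1 L (fun i => if h : i < 1 then (r ⟨i, h⟩ : ℕ) else 0))]
  rw [← Fin.sum_univ_eq_sum_range (fun m => a^m * q^(m^2) / qp q q (L-m) * β m) (L+1)]
  apply Finset.sum_congr rfl
  intro v _
  have harg : (fun i => if h : i < 1 then
      (((Equiv.funUnique (Fin 1) (Fin (L+1))).symm v) ⟨i, h⟩ : ℕ) else 0)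
      = fun i => if i < 1 then (v : ℕ) else 0 := by
    funext i
    split_ifs with h
    · rfl
    · rfl
  rw [harg, G]
  rw [if_pos (by intro i hi; omega)]
  simp only [Finset.sum_range_one, Finset.prod_range_zero, Nat.sub_self]
  norm_num

lemma FS_succ (q a : ℂ) (β : ℕ → ℂ) (k : ℕ) (hk : 1 ≤ k) (L : ℕ) :
    FS q a β (k+1) L = ∑ m ∈ range (L+1), a^m * q^(m^2) / qp q q (L-m) * FS q a β k m := by
  classical
  rw [FS]
  rw [← Equiv.sum_comp (Fin.consEquiv (fun _ : Fin (k+1) => Fin (L+1)))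
      (fun r => G q a β (k+1) L (fun i => if h : i < k+1 then (r ⟨i, h⟩ : ℕ) else 0))]
  rw [Fintype.sum_prod_type]
  rw [← Fin.sum_univ_eq_sum_range
    (fun m => a^m * q^(m^2) / qp q q (L-m) * FS q a β k m) (L+1)]
  apply Finset.sum_congr rfl
  intro x _
  have hm : (x : ℕ) ≤ L := by omega
  -- abbreviations
  set m := (x : ℕ) with hmdef
  have hG : ∀ s : Fin k → Fin (L+1),
      G q a β (k+1) L (fun i => if h : i < k+1 then
        ((Fin.consEquiv (fun _ : Fin (k+1) => Fin (L+1)) (x, s)) ⟨i, h⟩ : ℕ) else 0)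
      = if (if h : 0 < k then (s ⟨0, h⟩ : ℕ) else 0) ≤ m then
          a^m * q^(m^2) / qp q q (L-m)
            * G q a β k m (fun i => if h : i < k then (s ⟨i, h⟩ : ℕ) else 0)
        else 0 := by
    intro s
    refine G_cons q a β k hk L m _
      (fun i => if h : i < k then (s ⟨i, h⟩ : ℕ) else 0) ?_ ?_
    · simp only [Fin.consEquiv_apply]
      rw [dif_pos (Nat.succ_pos k)]
      simp only [Fin.mk_zero, Fin.cons_zero]
      rfl
    · intro i
      by_cases hik : i < k
      · simp only [Fin.consEquiv_apply]
        rw [dif_pos (show i+1 < k+1 by omega), dif_pos hik]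
        rw [show (⟨i+1, show i+1 < k+1 by omega⟩ : Fin (k+1)) = Fin.succ ⟨i, hik⟩
          from by ext; simp, Fin.cons_succ]
      · simp only [Fin.consEquiv_apply]
        rw [dif_neg (show ¬(i+1 < k+1) by omega), dif_neg hik]
  rw [Finset.sum_congr rfl (fun s _ => hG s)]
  -- now reduce the sum over s : Fin k → Fin (L+1) to s' : Fin k → Fin (m+1)
  set C := a^m * q^(m^2) / qp q q (L-m) with hC
  set ι : (Fin k → Fin (m+1)) → (Fin k → Fin (L+1)) :=
    fun s' j => ⟨(s' j : ℕ), by have := (s' j).isLt; omega⟩ with hι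
  have hinj : Function.Injective ι := by
    intro s₁ s₂ h
    funext j
    have h2 := congrFun h j
    simp only [hι, Fin.mk.injEq] at h2
    exact Fin.ext h2
  have hbound : ∀ (s : Fin k → Fin (L+1)),
      (if h : 0 < k then (s ⟨0, h⟩ : ℕ) else 0) ≤ m →
      (∀ i < k-1, (if h : i+1 < k then (s ⟨i+1, h⟩ : ℕ) else 0)
        ≤ (if h : i < k then (s ⟨i, h⟩ : ℕ) else 0)) →
      ∀ i (hi : i < k), (s ⟨i, hi⟩ : ℕ) ≤ m := by
    intro s h0 hchain i
    induction i with
    | zero =>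
      intro hi
      rw [dif_pos hi] at h0
      exact h0
    | succ j IHj =>
      intro hi
      have hj : j < k := by omega
      have hcc := hchain j (by omega)
      rw [dif_pos hi, dif_pos hj] at hcc
      exact le_trans hcc (IHj hj)
  have hzero : ∀ s ∈ (Finset.univ : Finset (Fin k → Fin (L+1))),
      s ∉ Finset.image ι Finset.univ →
      (if (if h : 0 < k then (s ⟨0, h⟩ : ℕ) else 0) ≤ m then
        C * G q a β k m (fun i => if h : i < k then (s ⟨i, h⟩ : ℕ) else 0)
      else 0) = 0 := by
    intro s _ hs
    by_cases hc0 : (if h : 0 < k then (s ⟨0, h⟩ : ℕ) else 0) ≤ m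
    · rw [if_pos hc0]
      by_cases hchain : ∀ i < k-1,
          (fun i => if h : i < k then (s ⟨i, h⟩ : ℕ) else 0) (i+1)
            ≤ (fun i => if h : i < k then (s ⟨i, h⟩ : ℕ) else 0) i
      · exfalso
        apply hs
        have hb := hbound s hc0 (by simpa using hchain)
        refine Finset.mem_image.2 ⟨fun j => ⟨(s j : ℕ), ?_⟩, Finset.mem_univ _, ?_⟩
        · have := hb j.val j.isLt
          rw [Fin.eta] at this
          omega
        · funext j
          exact Fin.ext rfl
      · rw [G, if_neg hchain, mul_zero]
    · rw [if_neg hc0]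
  rw [← Finset.sum_subset (Finset.subset_univ (Finset.image ι Finset.univ)) hzero]
  rw [Finset.sum_image (fun s₁ _ s₂ _ h => hinj h)]
  have hterm2 : ∀ s' ∈ (Finset.univ : Finset (Fin k → Fin (m+1))),
      (if (if h : 0 < k then (ι s' ⟨0, h⟩ : ℕ) else 0) ≤ m then
        C * G q a β k m (fun i => if h : i < k then (ι s' ⟨i, h⟩ : ℕ) else 0)
      else 0)
      = C * G q a β k m (fun i => if h : i < k then (s' ⟨i, h⟩ : ℕ) else 0) := by
    intro s' _
    have hcond : (if h : 0 < k then (ι s' ⟨0, h⟩ : ℕ) else 0) ≤ m := by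
      rw [dif_pos (by omega : 0 < k)]
      show ((s' ⟨0, by omega⟩ : Fin (m+1)) : ℕ) ≤ m
      exact Fin.is_le _
    rw [if_pos hcond]
  rw [Finset.sum_congr rfl hterm2, ← Finset.mul_sum, FS]

lemma FS_eq_BB (q a : ℂ) (β : ℕ → ℂ) : ∀ k, 1 ≤ k → ∀ L, FS q a β k L = BB q a β k L := by
  intro k
  induction k with
  | zero => intro h; omega
  | succ k IH =>
    intro _ L
    by_cases hk1 : 1 ≤ k
    · rw [FS_succ q a β k hk1 L]
      show _ = ∑ r ∈ range (L+1), a^r * q^(r^2) / qp q q (L-r) * BB q a β k r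
      exact Finset.sum_congr rfl fun m _ => by rw [IH hk1 m]
    · have hk0 : k = 0 := by omega
      subst hk0
      rw [FS_one]
      rfl

/-- The $k$-fold iterated Bailey chain with $\rho_1,\rho_2\to\infty$:
$\alpha^{(k)}_L = a^{kL}q^{kL^2}\alpha_L$ and
$\beta^{(k)}_L = \sum_{L\ge r_1\ge\cdots\ge r_k\ge 0}
\frac{a^{r_1+\cdots+r_k}q^{r_1^2+\cdots+r_k^2}}{(q)_{L-r_1}(q)_{r_1-r_2}\cdots(q)_{r_{k-1}-r_k}}
\beta_{r_k}$ form a Bailey pair relative to $a$. -/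
theorem bailey_chain_iterated (q a : ℂ) (k : ℕ) (hk : 1 ≤ k)
    (hq0 : ∀ n : ℕ, qp q q n ≠ 0)
    (haq : ∀ n : ℕ, qp q (a * q) n ≠ 0)
    (α β αk βk : ℕ → ℂ)
    (hBP : ∀ L, β L = ∑ i ∈ Finset.range (L + 1),
      α i / (qp q q (L - i) * qp q (a * q) (L + i)))
    (hαk : ∀ L, αk L = a ^ (k * L) * q ^ (k * L ^ 2) * α L)
    (hβk : ∀ L, βk L = ∑ r : Fin k → Fin (L + 1),
      (fun f : ℕ → ℕ =>
        if ∀ i < k - 1, f (i + 1) ≤ f i then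
          a ^ (∑ i ∈ Finset.range k, f i) * q ^ (∑ i ∈ Finset.range k, (f i) ^ 2) /
            (qp q q (L - f 0) * ∏ i ∈ Finset.range (k - 1), qp q q (f i - f (i + 1))) *
            β (f (k - 1))
        else 0)
      (fun i => if h : i < k then (r ⟨i, h⟩ : ℕ) else 0)) :
    ∀ L, βk L = ∑ i ∈ Finset.range (L + 1),
      αk i / (qp q q (L - i) * qp q (a * q) (L + i)) := by
  intro L
  have h1 : βk L = FS q a β k L := by rw [hβk L]; rfl
  rw [h1, FS_eq_BB q a β k hk L, BB_bp q a hq0 haq α β hBP k L]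
  exact Finset.sum_congr rfl fun i _ => by rw [hαk i]
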